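/- arXiv:math/9811126 — 2 statements merged into one kernel-verified Lean document; each statement's English description precedes it below -/
import Mathlib

section
/- For any multi-index P = (p_1, ..., p_n) of nonnegative integers, any nonnegative integer q, and any real m > 0, one has ∫_{C^n} |z^P|^2 |z|^{2q} e^{-m|z|^2} dV_0 = (n+p+q-1)! · P! / ((p+n-1)! · m^{n+p+q}), where p = p_1 + ⋯ + p_n and P! = p_1! ⋯ p_n!. -/
open MeasureTheory Real Finset
open MeasureTheory Real Finset

lemma pow_le_factorial_mul_exp {t : ℝ} (ht : 0 ≤ t) (k : ℕ) :
    t ^ k ≤ k.factorial * Real.exp t := by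
  have h := Real.sum_le_exp_of_nonneg ht (k + 1)
  have h2 : t ^ k / k.factorial ≤ ∑ i ∈ range (k + 1), t ^ i / i.factorial :=
    Finset.single_le_sum (f := fun i => t ^ i / i.factorial)
      (fun i _ => by positivity) (Finset.self_mem_range_succ k)
  have hk : (0:ℝ) < k.factorial := by positivity
  have h3 := h2.trans h
  rw [div_le_iff₀ hk] at h3
  rw [mul_comm]; exact h3

lemma integrable_exp_norm_sq {b : ℝ} (hb : 0 < b) :
    Integrable (fun x : ℂ => Real.exp (-b * ‖x‖ ^ 2)) := by
  have h2 : Integrable (fun p : ℝ × ℝ => Real.exp (-b * p.1 ^ 2) * Real.exp (-b * p.2 ^ 2)) :=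
    (integrable_exp_neg_mul_sq hb).mul_prod (integrable_exp_neg_mul_sq hb)
  have h3 := (Complex.volume_preserving_equiv_real_prod.integrable_comp_emb
    Complex.measurableEquivRealProd.measurableEmbedding).mpr h2
  refine h3.congr ?_
  filter_upwards with x
  simp only [Function.comp_apply, Complex.measurableEquivRealProd, Homeomorph.toMeasurableEquiv_coe]
  have h1 : (Complex.equivRealProdCLM.toHomeomorph x).1 = x.re := rfl
  have h2' : (Complex.equivRealProdCLM.toHomeomorph x).2 = x.im := rfl
  rw [h1, h2', ← Real.exp_add]
  congr 1
  have : ‖x‖ ^ 2 = x.re ^ 2 + x.im ^ 2 := by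
    rw [Complex.sq_norm, Complex.normSq_apply]; ring
  rw [this]; ring

lemma integrable_norm_pow_exp {m : ℝ} (hm : 0 < m) (k : ℕ) :
    Integrable (fun x : ℂ => ‖x‖ ^ (2 * k) * Real.exp (-m * ‖x‖ ^ 2)) := by
  refine Integrable.mono' (g := fun x : ℂ =>
      (k.factorial * (2 / m) ^ k) * Real.exp (-(m / 2) * ‖x‖ ^ 2))
    (((integrable_exp_norm_sq (by linarith)).const_mul _)) ?_ ?_
  · apply Continuous.aestronglyMeasurable
    fun_prop
  · filter_upwards with x
    have ht : (0:ℝ) ≤ ‖x‖ ^ 2 := by positivity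
    have key := pow_le_factorial_mul_exp (t := m / 2 * ‖x‖ ^ 2) (by positivity) k
    have h1 : ‖x‖ ^ (2 * k) = (‖x‖ ^ 2) ^ k := by rw [pow_mul]
    rw [Real.norm_eq_abs, abs_of_nonneg (by positivity), h1]
    have h2 : (‖x‖ ^ 2) ^ k ≤ k.factorial * (2 / m) ^ k * Real.exp (m / 2 * ‖x‖ ^ 2) := by
      have hpos : (0:ℝ) < (m / 2) ^ k := by positivity
      rw [mul_pow] at key
      rw [← mul_le_mul_iff_right₀ hpos]
      refine key.trans_eq ?_
      have hmm : ((m:ℝ) / 2 * (2 / m)) = 1 := by field_simp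
      calc (k.factorial : ℝ) * Real.exp (m / 2 * ‖x‖ ^ 2)
          = (m / 2 * (2 / m)) ^ k * ((k.factorial : ℝ) * Real.exp (m / 2 * ‖x‖ ^ 2)) := by
            rw [hmm, one_pow, one_mul]
        _ = (m / 2) ^ k * ((k.factorial : ℝ) * (2 / m) ^ k * Real.exp (m / 2 * ‖x‖ ^ 2)) := by
            rw [mul_pow]; ring
    calc (‖x‖ ^ 2) ^ k * Real.exp (-m * ‖x‖ ^ 2)
        ≤ (k.factorial * (2 / m) ^ k * Real.exp (m / 2 * ‖x‖ ^ 2)) * Real.exp (-m * ‖x‖ ^ 2) :=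
          mul_le_mul_of_nonneg_right h2 (Real.exp_pos _).le
      _ = k.factorial * (2 / m) ^ k * Real.exp (-(m / 2) * ‖x‖ ^ 2) := by
          rw [mul_assoc, ← Real.exp_add]; ring_nf

lemma integral_complex_norm_pow_exp {m : ℝ} (hm : 0 < m) (k : ℕ) :
    ∫ x : ℂ, ‖x‖ ^ (2 * k) * Real.exp (-m * ‖x‖ ^ 2)
      = π * k.factorial / m ^ (k + 1) := by
  have h := Complex.integral_rpow_mul_exp_neg_mul_rpow (p := 2) (q := (2 * k : ℕ))
    (by norm_num) (lt_of_lt_of_le (by norm_num) (Nat.cast_nonneg _)) hm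
  have hL : (∫ x : ℂ, ‖x‖ ^ ((2 * k : ℕ) : ℝ) * rexp (-m * ‖x‖ ^ (2:ℝ)))
      = ∫ x : ℂ, ‖x‖ ^ (2 * k) * Real.exp (-m * ‖x‖ ^ 2) := by
    congr 1; ext x
    rw [Real.rpow_natCast, show ((2:ℝ)) = ((2:ℕ):ℝ) by norm_num, Real.rpow_natCast]
  rw [hL] at h
  rw [h]
  have e1 : (-(((2 * k : ℕ) : ℝ) + 2) / 2) = -((k:ℝ) + 1) := by push_cast; ring
  have e2 : ((((2 * k : ℕ) : ℝ)) + 2) / 2 = (k:ℝ) + 1 := by push_cast; ring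
  rw [e1, e2, Real.Gamma_nat_eq_factorial, Real.rpow_neg hm.le,
    show ((k:ℝ) + 1) = (((k+1 : ℕ)):ℝ) from by push_cast; ring, Real.rpow_natCast]
  ring

lemma prod_update_norm {n : ℕ} (P : Fin n → ℕ) (z : Fin n → ℂ) (j : Fin n) :
    ∏ i, ‖z i‖ ^ (2 * Function.update P j (P j + 1) i)
      = ‖z j‖ ^ 2 * ∏ i, ‖z i‖ ^ (2 * P i) := by
  rw [← Finset.mul_prod_erase univ (fun i => ‖z i‖ ^ (2 * Function.update P j (P j + 1) i))
      (mem_univ j),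
    ← Finset.mul_prod_erase univ (fun i => ‖z i‖ ^ (2 * P i)) (mem_univ j)]
  have he : ∏ i ∈ univ.erase j, ‖z i‖ ^ (2 * Function.update P j (P j + 1) i)
      = ∏ i ∈ univ.erase j, ‖z i‖ ^ (2 * P i) :=
    Finset.prod_congr rfl fun i hi => by
      rw [Function.update_of_ne (Finset.ne_of_mem_erase hi)]
  rw [he, Function.update_self, ← mul_assoc]
  congr 1
  rw [show 2 * (P j + 1) = 2 * P j + 2 from by ring, pow_add]
  ring

lemma sum_update_succ {n : ℕ} (P : Fin n → ℕ) (j : Fin n) :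
    ∑ i, Function.update P j (P j + 1) i = (∑ i, P i) + 1 := by
  rw [← Finset.add_sum_erase univ (fun i => Function.update P j (P j + 1) i) (mem_univ j),
    ← Finset.add_sum_erase univ P (mem_univ j)]
  have he : ∑ i ∈ univ.erase j, Function.update P j (P j + 1) i = ∑ i ∈ univ.erase j, P i :=
    Finset.sum_congr rfl fun i hi => by
      rw [Function.update_of_ne (Finset.ne_of_mem_erase hi)]
  rw [he, Function.update_self]
  omega

lemma prod_update_factorial {n : ℕ} (P : Fin n → ℕ) (j : Fin n) :
    ∏ i, (Function.update P j (P j + 1) i).factorial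
      = (P j + 1) * ∏ i, (P i).factorial := by
  rw [← Finset.mul_prod_erase univ (fun i => (Function.update P j (P j + 1) i).factorial)
      (mem_univ j),
    ← Finset.mul_prod_erase univ (fun i => (P i).factorial) (mem_univ j)]
  have he : ∏ i ∈ univ.erase j, (Function.update P j (P j + 1) i).factorial
      = ∏ i ∈ univ.erase j, (P i).factorial :=
    Finset.prod_congr rfl fun i hi => by
      rw [Function.update_of_ne (Finset.ne_of_mem_erase hi)]
  rw [he, Function.update_self, Nat.factorial_succ, mul_assoc]

lemma key_pointwise {n : ℕ} (P : Fin n → ℕ) (q : ℕ) (m : ℝ) (z : Fin n → ℂ) :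
    (∏ i, ‖z i‖ ^ (2 * P i)) * (∑ i, ‖z i‖ ^ 2) ^ (q + 1) *
        Real.exp (-m * ∑ i, ‖z i‖ ^ 2)
      = ∑ j, (∏ i, ‖z i‖ ^ (2 * Function.update P j (P j + 1) i)) *
          (∑ i, ‖z i‖ ^ 2) ^ q * Real.exp (-m * ∑ i, ‖z i‖ ^ 2) := by
  have : ∀ j : Fin n, (∏ i, ‖z i‖ ^ (2 * Function.update P j (P j + 1) i)) *
      (∑ i, ‖z i‖ ^ 2) ^ q * Real.exp (-m * ∑ i, ‖z i‖ ^ 2)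
      = ‖z j‖ ^ 2 * ((∏ i, ‖z i‖ ^ (2 * P i)) * (∑ i, ‖z i‖ ^ 2) ^ q *
          Real.exp (-m * ∑ i, ‖z i‖ ^ 2)) := fun j => by
    rw [prod_update_norm]; ring
  rw [Finset.sum_congr rfl fun j _ => this j, ← Finset.sum_mul, pow_succ]
  ring

lemma integrable_main {n : ℕ} {m : ℝ} (hm : 0 < m) (q : ℕ) (P : Fin n → ℕ) :
    Integrable (fun z : Fin n → ℂ => (∏ i, ‖z i‖ ^ (2 * P i)) * (∑ i, ‖z i‖ ^ 2) ^ q *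
      Real.exp (-m * ∑ i, ‖z i‖ ^ 2)) := by
  induction q generalizing P with
  | zero =>
    have hfun : (fun z : Fin n → ℂ => (∏ i, ‖z i‖ ^ (2 * P i)) * (∑ i, ‖z i‖ ^ 2) ^ 0 *
        Real.exp (-m * ∑ i, ‖z i‖ ^ 2))
        = fun z => ∏ i, (‖z i‖ ^ (2 * P i) * Real.exp (-m * ‖z i‖ ^ 2)) := by
      ext z
      rw [pow_zero, mul_one, Finset.prod_mul_distrib, ← Real.exp_sum]
      congr 2
      rw [Finset.mul_sum]
    rw [hfun]
    exact Integrable.fintype_prod fun i => integrable_norm_pow_exp hm (P i)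
  | succ q ih =>
    have hfun : (fun z : Fin n → ℂ => (∏ i, ‖z i‖ ^ (2 * P i)) * (∑ i, ‖z i‖ ^ 2) ^ (q + 1) *
        Real.exp (-m * ∑ i, ‖z i‖ ^ 2))
        = fun z => ∑ j, (∏ i, ‖z i‖ ^ (2 * Function.update P j (P j + 1) i)) *
            (∑ i, ‖z i‖ ^ 2) ^ q * Real.exp (-m * ∑ i, ‖z i‖ ^ 2) := by
      ext z; exact key_pointwise P q m z
    rw [hfun]
    exact integrable_finset_sum _ fun j _ => ih _

lemma main_formula {n : ℕ} (hn : 0 < n) {m : ℝ} (hm : 0 < m) (q : ℕ) (P : Fin n → ℕ) :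
    (π : ℝ)⁻¹ ^ n *
      ∫ z : Fin n → ℂ,
        (∏ i, ‖z i‖ ^ (2 * P i)) * (∑ i, ‖z i‖ ^ 2) ^ q *
          Real.exp (-m * ∑ i, ‖z i‖ ^ 2)
    = (Nat.factorial (n + (∑ i, P i) + q - 1) * ((∏ i, Nat.factorial (P i) : ℕ) : ℝ)) /
        (Nat.factorial ((∑ i, P i) + n - 1) * m ^ (n + (∑ i, P i) + q)) := by
  induction q generalizing P with
  | zero =>
    have hfun : (fun z : Fin n → ℂ => (∏ i, ‖z i‖ ^ (2 * P i)) * (∑ i, ‖z i‖ ^ 2) ^ 0 *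
        Real.exp (-m * ∑ i, ‖z i‖ ^ 2))
        = fun z => ∏ i, (‖z i‖ ^ (2 * P i) * Real.exp (-m * ‖z i‖ ^ 2)) := by
      ext z
      rw [pow_zero, mul_one, Finset.prod_mul_distrib, ← Real.exp_sum]
      congr 2
      rw [Finset.mul_sum]
    rw [show (∫ z : Fin n → ℂ, (∏ i, ‖z i‖ ^ (2 * P i)) * (∑ i, ‖z i‖ ^ 2) ^ 0 *
        Real.exp (-m * ∑ i, ‖z i‖ ^ 2))
      = ∫ z : Fin n → ℂ, ∏ i, (‖z i‖ ^ (2 * P i) * Real.exp (-m * ‖z i‖ ^ 2)) from by rw [hfun]]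
    rw [MeasureTheory.volume_pi, MeasureTheory.integral_fintype_prod_eq_prod (ι := Fin n)
      (fun i (x : ℂ) => ‖x‖ ^ (2 * P i) * Real.exp (-m * ‖x‖ ^ 2))]
    simp_rw [integral_complex_norm_pow_exp hm]
    rw [Finset.prod_div_distrib, Finset.prod_mul_distrib, Finset.prod_const,
      Finset.prod_pow_eq_pow_sum]
    have hsum : ∑ i, (P i + 1) = (∑ i, P i) + n := by
      rw [Finset.sum_add_distrib, Finset.sum_const, card_univ, Fintype.card_fin, smul_eq_mul,
        mul_one]
    rw [hsum]
    have h1 : n + (∑ i, P i) + 0 - 1 = (∑ i, P i) + n - 1 := by omega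
    have h2 : n + (∑ i, P i) + 0 = (∑ i, P i) + n := by omega
    rw [h1, h2, card_univ, Fintype.card_fin]
    have hπ : (π : ℝ) ≠ 0 := Real.pi_ne_zero
    have hmn : (m : ℝ) ^ ((∑ i, P i) + n) ≠ 0 := by positivity
    have hfac : (Nat.factorial ((∑ i, P i) + n - 1) : ℝ) ≠ 0 := by
      exact_mod_cast Nat.factorial_ne_zero _
    push_cast
    field_simp
    rw [← mul_pow]; simp [hπ]
  | succ q ih =>
    have hfun : (fun z : Fin n → ℂ => (∏ i, ‖z i‖ ^ (2 * P i)) * (∑ i, ‖z i‖ ^ 2) ^ (q + 1) *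
        Real.exp (-m * ∑ i, ‖z i‖ ^ 2))
        = fun z => ∑ j, (∏ i, ‖z i‖ ^ (2 * Function.update P j (P j + 1) i)) *
            (∑ i, ‖z i‖ ^ 2) ^ q * Real.exp (-m * ∑ i, ‖z i‖ ^ 2) := by
      ext z; exact key_pointwise P q m z
    rw [show (∫ z : Fin n → ℂ, (∏ i, ‖z i‖ ^ (2 * P i)) * (∑ i, ‖z i‖ ^ 2) ^ (q + 1) *
        Real.exp (-m * ∑ i, ‖z i‖ ^ 2))
      = ∫ z : Fin n → ℂ, ∑ j, (∏ i, ‖z i‖ ^ (2 * Function.update P j (P j + 1) i)) *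
          (∑ i, ‖z i‖ ^ 2) ^ q * Real.exp (-m * ∑ i, ‖z i‖ ^ 2) from by rw [hfun]]
    rw [integral_finset_sum _ fun j _ => integrable_main hm q _, Finset.mul_sum]
    rw [Finset.sum_congr rfl fun j (_ : j ∈ univ) => ih (Function.update P j (P j + 1))]
    have hterm : ∀ j : Fin n,
        ((Nat.factorial (n + (∑ i, Function.update P j (P j + 1) i) + q - 1) : ℝ) *
            ((∏ i, Nat.factorial (Function.update P j (P j + 1) i) : ℕ) : ℝ)) /
          ((Nat.factorial ((∑ i, Function.update P j (P j + 1) i) + n - 1) : ℝ) *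
            m ^ (n + (∑ i, Function.update P j (P j + 1) i) + q))
        = ((P j : ℝ) + 1) *
            ((Nat.factorial (n + (∑ i, P i) + q) : ℝ) * ((∏ i, Nat.factorial (P i) : ℕ) : ℝ) /
              ((Nat.factorial ((∑ i, P i) + n) : ℝ) * m ^ (n + (∑ i, P i) + q + 1))) := by
      intro j
      rw [sum_update_succ, prod_update_factorial]
      rw [show n + ((∑ i, P i) + 1) + q - 1 = n + (∑ i, P i) + q from by omega,
        show (∑ i, P i) + 1 + n - 1 = (∑ i, P i) + n from by omega,
        show n + ((∑ i, P i) + 1) + q = n + (∑ i, P i) + q + 1 from by omega]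
      push_cast
      ring
    rw [Finset.sum_congr rfl fun j _ => hterm j, ← Finset.sum_mul]
    have hsum : ∑ j : Fin n, ((P j : ℝ) + 1) = ((∑ i, P i : ℕ) : ℝ) + n := by
      push_cast
      rw [Finset.sum_add_distrib, Finset.sum_const, card_univ, Fintype.card_fin]
      simp
    rw [hsum]
    rw [show n + (∑ i, P i) + (q + 1) - 1 = n + (∑ i, P i) + q from by omega,
      show n + (∑ i, P i) + (q + 1) = n + (∑ i, P i) + q + 1 from by omega]
    have hfac : ((∑ i, P i) + n).factorial
        = ((∑ i, P i) + n) * ((∑ i, P i) + n - 1).factorial := by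
      rw [Nat.mul_factorial_pred (by omega)]
    rw [hfac]
    have hm1 : (m : ℝ) ^ (n + (∑ i, P i) + q + 1) ≠ 0 := by positivity
    have hf1 : (Nat.factorial ((∑ i, P i) + n - 1) : ℝ) ≠ 0 := by
      exact_mod_cast Nat.factorial_ne_zero _
    have hf2 : ((∑ i, P i : ℕ) : ℝ) + n ≠ 0 := by positivity
    push_cast
    field_simp


/-- Weighted Gaussian moment formula on ℂⁿ:
`∫ |z^P|² |z|^{2q} e^{-m|z|²} dV₀ = (n+p+q-1)!·P!/((p+n-1)!·m^{n+p+q})`. -/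
theorem gaussian_monomial_weighted_integral (n : ℕ) (hn : 0 < n) (P : Fin n → ℕ)
    (q : ℕ) (m : ℝ) (hm : 0 < m) :
    (π : ℝ)⁻¹ ^ n *
      ∫ z : Fin n → ℂ,
        (∏ i, ‖z i‖ ^ (2 * P i)) * (∑ i, ‖z i‖ ^ 2) ^ q *
          Real.exp (-m * ∑ i, ‖z i‖ ^ 2)
    = (Nat.factorial (n + (∑ i, P i) + q - 1) * ((∏ i, Nat.factorial (P i) : ℕ) : ℝ)) /
        (Nat.factorial ((∑ i, P i) + n - 1) * m ^ (n + (∑ i, P i) + q)) :=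
  main_formula hn hm q P
end

section
/- Let A : {1,...,n}^p × {1,...,n}^p → C be symmetric, meaning A(σ(I), η(J)) = A(I, J) for all permutations σ, η of the p coordinates and all I, J ∈ {1,...,n}^p. Then for any integer q ≥ 0 and m > 0, Σ_{I,J} A(I,J) ∫_{C^n} z_{i_1}⋯z_{i_p} \bar z_{j_1}⋯\bar z_{j_p} |z|^{2q} e^{-m|z|^2} dV_0 = (Σ_I A(I,I)) · p!(n+p+q-1)! / ((p+n-1)! m^{n+p+q}). -/
open MeasureTheory Real Finset

lemma radial_moment {m : ℝ} (hm : 0 < m) (k : ℕ) :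
    ∫ r in Set.Ioi (0:ℝ), r ^ (2*k+1) * rexp (-m * r ^ 2)
      = k.factorial / (2 * m ^ (k+1)) := by
  have h := integral_rpow_mul_exp_neg_mul_rpow (p := 2) (q := ((2*k+1 : ℕ) : ℝ))
    two_pos (neg_one_lt_zero.trans_le (Nat.cast_nonneg _)) hm
  have e1 : ∀ x ∈ Set.Ioi (0:ℝ), x ^ ((2*k+1 : ℕ) : ℝ) * rexp (-m * x ^ (2:ℝ))
      = x ^ (2*k+1) * rexp (-m * x ^ 2) := by
    intro x hx
    rw [Real.rpow_natCast, Real.rpow_two]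
  rw [setIntegral_congr_fun measurableSet_Ioi e1] at h
  rw [h]
  have e2 : (-(((2*k+1 : ℕ) : ℝ) + 1) / 2) = -((k:ℝ)+1) := by push_cast; ring
  have e3 : ((((2*k+1 : ℕ) : ℝ)) + 1) / 2 = (k:ℝ)+1 := by push_cast; ring
  rw [e2, e3, Real.Gamma_nat_eq_factorial, Real.rpow_neg hm.le]
  have : m ^ ((k:ℝ)+1) = m ^ (k+1) := by
    rw [show ((k:ℝ)+1) = ((k+1 : ℕ) : ℝ) by push_cast; ring, Real.rpow_natCast]
  rw [this]
  ring

lemma angular_int {c : ℤ} (hc : c ≠ 0) :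
    ∫ θ in Set.Ioo (-π) π, Complex.exp ((c:ℂ) * Complex.I * θ) = 0 := by
  have hc' : (c:ℂ) * Complex.I ≠ 0 :=
    mul_ne_zero (by exact_mod_cast hc) Complex.I_ne_zero
  rw [← integral_Ioc_eq_integral_Ioo,
    ← intervalIntegral.integral_of_le (by linarith [Real.pi_pos] : -π ≤ π)]
  rw [integral_exp_mul_complex hc']
  have : Complex.exp ((c:ℂ) * Complex.I * (π:ℝ)) = Complex.exp ((c:ℂ) * Complex.I * ((-π:ℝ))) := by
    rw [Complex.exp_eq_exp_iff_exists_int]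
    exact ⟨c, by push_cast; ring⟩
  rw [this, sub_self, zero_div]

lemma complex_moment {m : ℝ} (hm : 0 < m) (a b : ℕ) :
    ∫ z : ℂ, z ^ a * (starRingEnd ℂ) z ^ b * ((rexp (-m * ‖z‖ ^ 2) : ℝ) : ℂ)
      = if a = b then (π : ℂ) * a.factorial / m ^ (a+1) else 0 := by
  rw [← Complex.integral_comp_polarCoord_symm]
  rw [polarCoord_target]
  have key : ∀ p ∈ Set.Ioi (0:ℝ) ×ˢ Set.Ioo (-π) π,
      p.1 • ((Complex.polarCoord.symm p) ^ a *
          (starRingEnd ℂ) (Complex.polarCoord.symm p) ^ b *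
          ((rexp (-m * ‖Complex.polarCoord.symm p‖ ^ 2) : ℝ) : ℂ))
      = (fun r : ℝ => ((r:ℂ) ^ (a+b+1) * ((rexp (-m * r ^ 2) : ℝ) : ℂ))) p.1 *
        (fun θ : ℝ => Complex.exp ((((a:ℤ) - (b:ℤ) : ℤ) : ℂ) * Complex.I * θ)) p.2 := by
    rintro ⟨r, θ⟩ ⟨hr, hθ⟩
    have hz : Complex.polarCoord.symm (r, θ) = (r:ℂ) * Complex.exp (θ * Complex.I) := by
      rw [Complex.polarCoord_symm_apply, Complex.exp_mul_I]
      push_cast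
      ring
    have hnorm : ‖Complex.polarCoord.symm (r, θ)‖ = r := by
      rw [Complex.norm_polarCoord_symm, abs_of_pos hr]
    have hconj : (starRingEnd ℂ) (Complex.polarCoord.symm (r, θ))
        = (r:ℂ) * Complex.exp (-(θ * Complex.I)) := by
      rw [hz, map_mul, Complex.conj_ofReal, ← Complex.exp_conj, map_mul, Complex.conj_ofReal,
        Complex.conj_I, mul_neg]
    rw [hconj, hnorm, hz]
    rw [mul_pow, mul_pow, ← Complex.exp_nat_mul, ← Complex.exp_nat_mul, Complex.real_smul]
    have he : Complex.exp ((a:ℂ) * (↑θ * Complex.I)) * Complex.exp ((b:ℂ) * -(↑θ * Complex.I))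
        = Complex.exp ((((a:ℤ) - (b:ℤ) : ℤ) : ℂ) * Complex.I * (θ:ℝ)) := by
      rw [← Complex.exp_add]
      congr 1
      push_cast
      ring
    simp only []
    linear_combination ((r:ℂ)^(a+b+1) * ((rexp (-m * r^2) : ℝ) : ℂ)) * he
  rw [setIntegral_congr_fun ((measurableSet_Ioi).prod measurableSet_Ioo) key]
  have hsplit : ∫ x : ℝ × ℝ in Set.Ioi (0:ℝ) ×ˢ Set.Ioo (-π) π,
      (fun r : ℝ => ((r:ℂ) ^ (a+b+1) * ((rexp (-m * r ^ 2) : ℝ) : ℂ))) x.1 *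
        (fun θ : ℝ => Complex.exp ((((a:ℤ) - (b:ℤ) : ℤ) : ℂ) * Complex.I * θ)) x.2
      = (∫ r in Set.Ioi (0:ℝ), ((r:ℂ) ^ (a+b+1) * ((rexp (-m * r ^ 2) : ℝ) : ℂ))) *
        ∫ θ in Set.Ioo (-π) π, Complex.exp ((((a:ℤ) - (b:ℤ) : ℤ) : ℂ) * Complex.I * θ) := by
    rw [← setIntegral_prod_mul, Measure.volume_eq_prod]
  rw [hsplit]
  have hrad : (∫ r in Set.Ioi (0:ℝ), ((r:ℂ) ^ (a+b+1) * ((rexp (-m * r ^ 2) : ℝ) : ℂ)))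
      = ((∫ r in Set.Ioi (0:ℝ), r ^ (a+b+1) * rexp (-m * r ^ 2) : ℝ) : ℂ) := by
    calc ∫ r in Set.Ioi (0:ℝ), ((r:ℂ) ^ (a+b+1) * ((rexp (-m * r ^ 2) : ℝ) : ℂ))
        = ∫ r in Set.Ioi (0:ℝ), ((r ^ (a+b+1) * rexp (-m * r ^ 2) : ℝ) : ℂ) := by
          congr 1 with r; push_cast; ring
      _ = _ := integral_ofReal
  by_cases hab : a = b
  · subst hab
    have h0 : (((a:ℤ) - (a:ℤ) : ℤ) : ℂ) = 0 := by push_cast; ring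
    simp only [h0, zero_mul, Complex.exp_zero, if_pos rfl]
    rw [MeasureTheory.setIntegral_const]
    rw [Complex.real_smul, mul_one]
    have hvol : volume.real (Set.Ioo (-π) π) = 2 * π := by
      rw [Real.volume_real_Ioo_of_le (by linarith [Real.pi_pos])]
      ring
    rw [hvol, hrad, show a + a + 1 = 2*a+1 by ring, radial_moment hm a]
    have hm' : (m:ℂ) ≠ 0 := by exact_mod_cast hm.ne'
    push_cast
    field_simp
  · have hc : ((a:ℤ) - (b:ℤ)) ≠ 0 := by
      intro h
      apply hab
      omega
    rw [angular_int hc, mul_zero, if_neg hab]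

lemma complex_moment_integrable {m : ℝ} (hm : 0 < m) (a b : ℕ) :
    Integrable (fun z : ℂ => z ^ a * (starRingEnd ℂ) z ^ b * ((rexp (-m * ‖z‖ ^ 2) : ℝ) : ℂ)) := by
  set N := a + b with hN
  set C : ℝ := (N.factorial * (2/m)^N + 1) with hC
  have hg : Integrable (fun z : ℂ => rexp (-(m/2) * ‖z‖ ^ 2)) := by
    have h := (GaussianFourier.integrable_cexp_neg_mul_sq_norm_add (V := ℂ)
      (b := ((m/2 : ℝ):ℂ)) (by simpa using half_pos hm) 0 0).norm
    simp only [zero_mul, add_zero] at h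
    refine h.congr (Filter.Eventually.of_forall fun z => ?_)
    show ‖Complex.exp (-((m/2 : ℝ):ℂ) * (‖z‖:ℂ)^2)‖ = rexp (-(m/2) * ‖z‖^2)
    rw [Complex.norm_exp,
      show -((m/2 : ℝ):ℂ) * (‖z‖:ℂ)^2 = ((-(m/2) * ‖z‖^2 : ℝ) : ℂ) by push_cast; ring,
      Complex.ofReal_re]
  refine ((hg.const_mul C).mono' ?_ ?_)
  · refine Continuous.aestronglyMeasurable ?_
    continuity
  · filter_upwards with z
    have ht : (0:ℝ) ≤ ‖z‖ := norm_nonneg z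
    set t := ‖z‖ with htdef
    have hnf : ‖z ^ a * (starRingEnd ℂ) z ^ b * ((rexp (-m * ‖z‖ ^ 2) : ℝ) : ℂ)‖
        = t^N * rexp (-m * t^2) := by
      rw [norm_mul, norm_mul, norm_pow, norm_pow, RCLike.norm_conj, Complex.norm_real,
        Real.norm_eq_abs, Real.abs_exp, hN, pow_add]
    rw [hnf]
    have hexp : rexp (-m * t^2) = rexp (-(m/2) * t^2) * rexp (-(m/2) * t^2) := by
      rw [← Real.exp_add]; congr 1; ring
    have hkey : t^N ≤ N.factorial * (2/m)^N * rexp ((m/2) * t^2) + 1 := by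
      rcases le_total t 1 with h1 | h1
      · have : t^N ≤ 1 := pow_le_one₀ ht h1
        have h2 : (0:ℝ) ≤ N.factorial * (2/m)^N * rexp ((m/2) * t^2) := by positivity
        linarith
      · have hx : ((m/2)*t^2)^N / N.factorial ≤ rexp ((m/2)*t^2) := by
          refine le_trans ?_ (Real.sum_le_exp_of_nonneg (by positivity) (N+1))
          exact Finset.single_le_sum (f := fun i => ((m/2)*t^2)^i / i.factorial)
            (fun i _ => by positivity) (Finset.self_mem_range_succ N)
        have h2 : t^N ≤ (t^2)^N := by
          rw [← pow_mul]
          exact pow_le_pow_right₀ h1 (by omega)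
        have h3 : (t^2)^N = (2/m)^N * ((m/2)*t^2)^N := by
          rw [mul_pow, ← mul_assoc, ← mul_pow]
          rw [show (2/m) * (m/2) = 1 by field_simp]
          rw [one_pow, one_mul]
        have h4 : ((m/2)*t^2)^N ≤ N.factorial * rexp ((m/2)*t^2) := by
          rw [div_le_iff₀ (by positivity : (0:ℝ) < (N.factorial : ℝ))] at hx
          linarith [hx]
        have h5 : (0:ℝ) ≤ (2/m)^N := by positivity
        calc t^N ≤ (2/m)^N * ((m/2)*t^2)^N := by rw [← h3]; exact h2
          _ ≤ (2/m)^N * (N.factorial * rexp ((m/2)*t^2)) := by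
              exact mul_le_mul_of_nonneg_left h4 h5
          _ ≤ N.factorial * (2/m)^N * rexp ((m/2) * t^2) + 1 := by nlinarith [Real.exp_pos ((m/2)*t^2)]
    have hexp1 : rexp (-(m/2) * t^2) ≤ 1 := by
      rw [← Real.exp_zero]
      exact Real.exp_le_exp.mpr (by nlinarith)
    have hexppos : (0:ℝ) < rexp (-(m/2) * t^2) := Real.exp_pos _
    have hcanc : rexp ((m/2) * t^2) * rexp (-(m/2) * t^2) = 1 := by
      rw [← Real.exp_add, show (m/2) * t^2 + -(m/2) * t^2 = 0 by ring, Real.exp_zero]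
    calc t^N * rexp (-m * t^2) = (t^N * rexp (-(m/2) * t^2)) * rexp (-(m/2) * t^2) := by
          rw [hexp]; ring
      _ ≤ C * rexp (-(m/2) * t^2) := by
          have : t^N * rexp (-(m/2) * t^2) ≤ C := by
            calc t^N * rexp (-(m/2) * t^2)
                ≤ (N.factorial * (2/m)^N * rexp ((m/2) * t^2) + 1) * rexp (-(m/2) * t^2) :=
                  mul_le_mul_of_nonneg_right hkey hexppos.le
              _ = N.factorial * (2/m)^N * (rexp ((m/2) * t^2) * rexp (-(m/2) * t^2))
                  + rexp (-(m/2) * t^2) := by ring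
              _ ≤ C := by rw [hcanc, hC]; nlinarith [show (0:ℝ) < N.factorial by exact_mod_cast N.factorial_pos]
          exact mul_le_mul_of_nonneg_right this hexppos.le
      _ = C * rexp (-(m/2) * ‖z‖ ^ 2) := rfl

def Cnt {p n : ℕ} (I : Fin p → Fin n) (i : Fin n) : ℕ := ∑ a, if I a = i then 1 else 0

lemma sum_Cnt {p n : ℕ} (I : Fin p → Fin n) : ∑ i, Cnt I i = p := by
  unfold Cnt
  rw [Finset.sum_comm]
  simp

lemma prod_pow_Cnt {p n : ℕ} {M : Type*} [CommMonoid M] (f : Fin n → M) (I : Fin p → Fin n) :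
    ∏ a, f (I a) = ∏ i, f i ^ Cnt I i := by
  unfold Cnt
  have h : ∀ a, f (I a) = ∏ i, f i ^ (if I a = i then 1 else 0) := by
    intro a
    simp [pow_ite]
  simp_rw [h]
  rw [Finset.prod_comm]
  exact Finset.prod_congr rfl fun i _ => (Finset.prod_pow_eq_pow_sum _ _ _)

lemma Cnt_cons {p n : ℕ} (x : Fin n) (J : Fin p → Fin n) (i : Fin n) :
    Cnt (Fin.cons x J) i = (if x = i then 1 else 0) + Cnt J i := by
  unfold Cnt
  rw [Fin.sum_univ_succ]
  simp

lemma count_card (n : ℕ) : ∀ (p : ℕ) (c : Fin n → ℕ), ∑ i, c i = p →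
    ((Finset.univ.filter fun J : Fin p → Fin n => ∀ i, Cnt J i = c i).card) *
      ∏ i, (c i).factorial = p.factorial := by
  intro p
  induction p with
  | zero =>
    intro c hc
    have hc0 : ∀ i, c i = 0 := by
      intro i
      exact (Finset.sum_eq_zero_iff.mp hc) i (Finset.mem_univ i)
    have hall : (Finset.univ.filter fun J : Fin 0 → Fin n => ∀ i, Cnt J i = c i) = Finset.univ := by
      apply Finset.filter_true_of_mem
      intro J _ i
      simp [Cnt, hc0 i]
    rw [hall]
    simp [hc0]
  | succ p ih =>
    intro c hc
    set T := Finset.univ.filter fun J : Fin (p+1) → Fin n => ∀ i, Cnt J i = c i with hT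
    set F := fun x : Fin n => Finset.univ.filter
      fun J' : Fin p → Fin n => ∀ i, (if x = i then 1 else 0) + Cnt J' i = c i with hF
    have hTb : T = Finset.univ.biUnion fun x : Fin n =>
        (F x).image (fun J' : Fin p → Fin n => (Fin.cons x J' : Fin (p+1) → Fin n)) := by
      ext J
      simp only [hT, hF, Finset.mem_filter, Finset.mem_univ, true_and, Finset.mem_biUnion,
        Finset.mem_image]
      constructor
      · intro hJ
        refine ⟨J 0, Fin.tail J, ?_, Fin.cons_self_tail J⟩
        intro i
        have := hJ i
        rw [← Fin.cons_self_tail J, Cnt_cons] at this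
        exact this
      · rintro ⟨x, J', hJ', rfl⟩ i
        rw [Cnt_cons]
        exact hJ' i
    have hdisj : ∀ x ∈ (Finset.univ : Finset (Fin n)), ∀ y ∈ (Finset.univ : Finset (Fin n)), x ≠ y →
        Disjoint ((F x).image (fun J' : Fin p → Fin n => (Fin.cons x J' : Fin (p+1) → Fin n)))
          ((F y).image (fun J' : Fin p → Fin n => (Fin.cons y J' : Fin (p+1) → Fin n))) := by
      intro x _ y _ hxy
      rw [Finset.disjoint_left]
      rintro J hx hy
      rw [Finset.mem_image] at hx hy
      obtain ⟨J1, -, h1⟩ := hx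
      obtain ⟨J2, -, h2⟩ := hy
      apply hxy
      have e1 : J 0 = x := by rw [← h1]; simp
      have e2 : J 0 = y := by rw [← h2]; simp
      rw [← e1, ← e2]
    have hcard : T.card = ∑ x : Fin n, (F x).card := by
      rw [hTb, Finset.card_biUnion hdisj]
      exact Finset.sum_congr rfl fun x _ =>
        Finset.card_image_of_injective _ (Fin.cons_right_injective (α := fun _ => Fin n) x)
    have hxkey : ∀ x : Fin n, (F x).card * ∏ i, (c i).factorial = c x * p.factorial := by
      intro x
      rcases Nat.eq_zero_or_pos (c x) with h0 | hpos
      · have : F x = ∅ := by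
          rw [Finset.eq_empty_iff_forall_notMem]
          intro J' hJ'
          rw [hF, Finset.mem_filter] at hJ'
          have := hJ'.2 x
          simp [h0] at this
        rw [this]
        simp [h0]
      · obtain ⟨k, hk⟩ : ∃ k, c x = k + 1 := ⟨c x - 1, by omega⟩
        set c' := Function.update c x k with hc'
        have hFx : F x = Finset.univ.filter fun J' : Fin p → Fin n => ∀ i, Cnt J' i = c' i := by
          apply Finset.filter_congr
          intro J' _
          constructor
          · intro hJ' i
            have h1 := hJ' i
            by_cases hix : x = i
            · subst hix
              rw [if_pos rfl] at h1
              rw [hc', Function.update_self]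
              omega
            · rw [if_neg hix] at h1
              rw [hc', Function.update_of_ne (fun hh => hix hh.symm)]
              omega
          · intro hJ' i
            have h1 := hJ' i
            by_cases hix : x = i
            · subst hix
              rw [hc', Function.update_self] at h1
              rw [if_pos rfl]
              omega
            · rw [hc', Function.update_of_ne (fun hh => hix hh.symm)] at h1
              rw [if_neg hix]
              omega
        have hsum' : ∑ i, c' i = p := by
          have h1 : ∑ i, c' i = k + ∑ i ∈ Finset.univ.erase x, c i := by
            rw [hc', ← Finset.add_sum_erase _ _ (Finset.mem_univ x), Function.update_self]
            congr 1
            exact Finset.sum_congr rfl fun i hi =>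
              Function.update_of_ne (Finset.ne_of_mem_erase hi) _ _
          have h2 : ∑ i, c i = c x + ∑ i ∈ Finset.univ.erase x, c i :=
            (Finset.add_sum_erase _ _ (Finset.mem_univ x)).symm
          omega
        have hprod : ∏ i, (c i).factorial = (k+1) * ∏ i, (c' i).factorial := by
          rw [← Finset.prod_erase_mul Finset.univ (fun i => (c i).factorial) (Finset.mem_univ x),
            ← Finset.prod_erase_mul Finset.univ (fun i => (c' i).factorial) (Finset.mem_univ x)]
          have : ∏ i ∈ Finset.univ.erase x, (c i).factorial
              = ∏ i ∈ Finset.univ.erase x, (c' i).factorial :=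
            Finset.prod_congr rfl fun i hi => by
              rw [hc', Function.update_of_ne (Finset.ne_of_mem_erase hi)]
          rw [this, hc', Function.update_self, hk, Nat.factorial_succ]
          ring
        rw [hFx, hprod, ← mul_assoc, mul_comm _ (k+1), mul_assoc, ih c' hsum', hk]
    calc T.card * ∏ i, (c i).factorial = ∑ x : Fin n, (F x).card * ∏ i, (c i).factorial := by
          rw [hcard, Finset.sum_mul]
      _ = ∑ x : Fin n, c x * p.factorial := Finset.sum_congr rfl fun x _ => hxkey x
      _ = (p+1) * p.factorial := by rw [← Finset.sum_mul, hc]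
      _ = (p+1).factorial := (Nat.factorial_succ p).symm

lemma sum_cons_split {q n : ℕ} (g : (Fin (q+1) → Fin n) → ℕ) :
    ∑ K : Fin (q+1) → Fin n, g K
      = ∑ x : Fin n, ∑ K' : Fin q → Fin n, g (Fin.cons x K') := by
  rw [← (Fin.consEquiv (fun _ => Fin n)).sum_comp g, Fintype.sum_prod_type]
  rfl

lemma S_key (n : ℕ) : ∀ (q : ℕ) (c : Fin (n+1) → ℕ),
    (∑ K : Fin q → Fin (n+1), ∏ i, (c i + Cnt K i).factorial) * (∑ i, c i + n).factorial
    = (∏ i, (c i).factorial) * (∑ i, c i + n + q).factorial := by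
  intro q
  induction q with
  | zero =>
    intro c
    have h1 : (∑ K : Fin 0 → Fin (n+1), ∏ i, (c i + Cnt K i).factorial)
        = ∏ i, (c i).factorial := by
      rw [Finset.sum_eq_single_of_mem (Fin.elim0 : Fin 0 → Fin (n+1)) (Finset.mem_univ _)]
      · exact Finset.prod_congr rfl fun i _ => by simp [Cnt]
      · intro K _ hK
        exact absurd (funext fun a => a.elim0) hK
    rw [h1]
    norm_num
  | succ q ih =>
    intro c
    set s := ∑ i, c i with hs
    rw [sum_cons_split (fun K => ∏ i, (c i + Cnt K i).factorial)]
    have hinner : ∀ (x : Fin (n+1)) (K' : Fin q → Fin (n+1)),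
        (∏ i, (c i + Cnt (Fin.cons x K') i).factorial)
        = ∏ i, ((c i + if x = i then 1 else 0) + Cnt K' i).factorial := by
      intro x K'
      refine Finset.prod_congr rfl fun i _ => ?_
      rw [Cnt_cons]
      congr 1
      omega
    simp_rw [hinner]
    have hx : ∀ x : Fin (n+1),
        (∑ K' : Fin q → Fin (n+1), ∏ i, ((c i + if x = i then 1 else 0) + Cnt K' i).factorial)
          * (s + 1 + n).factorial
        = (c x + 1) * ((∏ i, (c i).factorial) * (s + 1 + n + q).factorial) := by
      intro x
      have hsum : ∑ i, (c i + if x = i then 1 else 0) = s + 1 := by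
        rw [Finset.sum_add_distrib, ← hs]
        simp
      have hprod : (∏ i, (c i + if x = i then 1 else 0).factorial)
          = (c x + 1) * ∏ i, (c i).factorial := by
        rw [← Finset.prod_erase_mul Finset.univ
            (fun i => (c i + if x = i then 1 else 0).factorial) (Finset.mem_univ x),
          ← Finset.prod_erase_mul Finset.univ (fun i => (c i).factorial) (Finset.mem_univ x)]
        have he : (∏ i ∈ Finset.univ.erase x, (c i + if x = i then 1 else 0).factorial)
            = ∏ i ∈ Finset.univ.erase x, (c i).factorial :=
          Finset.prod_congr rfl fun i hi => by
            rw [if_neg (fun hh => (Finset.ne_of_mem_erase hi) hh.symm), Nat.add_zero]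
        rw [he, if_pos rfl, Nat.factorial_succ]
        ring
      have h := ih (fun i => c i + if x = i then 1 else 0)
      rw [hsum, hprod] at h
      rw [h]
      ring
    set A := ∑ x : Fin (n+1), ∑ K' : Fin q → Fin (n+1),
      ∏ i, ((c i + if x = i then 1 else 0) + Cnt K' i).factorial with hA
    have hfac : (s+n).factorial * (s+n+1) = (s+1+n).factorial := by
      rw [show s+1+n = (s+n)+1 by omega, Nat.factorial_succ]
      ring
    apply Nat.eq_of_mul_eq_mul_right (show 0 < s+n+1 by omega)
    calc A * (s+n).factorial * (s+n+1)
        = ∑ x : Fin (n+1), ((∑ K' : Fin q → Fin (n+1),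
            ∏ i, ((c i + if x = i then 1 else 0) + Cnt K' i).factorial)
              * (s+1+n).factorial) := by
          rw [mul_assoc, hfac, hA, Finset.sum_mul]
      _ = ∑ x : Fin (n+1), (c x + 1) * ((∏ i, (c i).factorial) * (s + 1 + n + q).factorial) :=
          Finset.sum_congr rfl fun x _ => hx x
      _ = (∑ x : Fin (n+1), (c x + 1)) * ((∏ i, (c i).factorial) * (s + 1 + n + q).factorial) := by
          rw [Finset.sum_mul]
      _ = (s+n+1) * ((∏ i, (c i).factorial) * (s + 1 + n + q).factorial) := by
          congr 1
          rw [Finset.sum_add_distrib, ← hs]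
          simp
          omega
      _ = (∏ i, (c i).factorial) * (s + n + (q+1)).factorial * (s+n+1) := by
          rw [show s + 1 + n + q = s + n + (q+1) by omega]
          ring

lemma exists_perm_of_cnt_eq {p n : ℕ} {I J : Fin p → Fin n} (h : ∀ i, Cnt I i = Cnt J i) :
    ∃ σ : Equiv.Perm (Fin p), I ∘ σ = J := by
  have hcard : ∀ i : Fin n, Fintype.card {a // J a = i} = Fintype.card {a // I a = i} := by
    intro i
    rw [Fintype.card_subtype, Fintype.card_subtype, Finset.card_filter, Finset.card_filter]
    exact (h i).symm
  let e : ∀ i : Fin n, {a // J a = i} ≃ {a // I a = i} := fun i => Fintype.equivOfCardEq (hcard i)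
  refine ⟨((Equiv.sigmaFiberEquiv J).symm.trans (Equiv.sigmaCongrRight e)).trans
    (Equiv.sigmaFiberEquiv I), funext fun a => ?_⟩
  exact (e (J a) ⟨a, rfl⟩).2

lemma mul_conj_norm_sq (w : ℂ) : ((‖w‖ ^ 2 : ℝ) : ℂ) = w * (starRingEnd ℂ) w := by
  rw [Complex.mul_conj, Complex.normSq_eq_norm_sq]

lemma pair_integral {n p q : ℕ} {m : ℝ} (hm : 0 < m) (I J : Fin p → Fin n) :
    ((π : ℂ)⁻¹) ^ n * ∫ z : Fin n → ℂ,
        (∏ a, z (I a)) * (∏ a, (starRingEnd ℂ) (z (J a))) *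
          ((((∑ i, ‖z i‖ ^ 2) ^ q * Real.exp (-m * ∑ i, ‖z i‖ ^ 2) : ℝ)) : ℂ)
    = if (∀ i, Cnt I i = Cnt J i) then
        (∑ K : Fin q → Fin n, (∏ i, ((Cnt I i + Cnt K i).factorial : ℂ))) / (m:ℂ) ^ (n + p + q)
      else 0 := by
  have hfun : ∀ z : Fin n → ℂ,
      (∏ a, z (I a)) * (∏ a, (starRingEnd ℂ) (z (J a))) *
          ((((∑ i, ‖z i‖ ^ 2) ^ q * Real.exp (-m * ∑ i, ‖z i‖ ^ 2) : ℝ)) : ℂ)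
      = ∑ K : Fin q → Fin n, ∏ i, ((z i) ^ (Cnt I i + Cnt K i) *
          (starRingEnd ℂ) (z i) ^ (Cnt J i + Cnt K i) * ((rexp (-m * ‖z i‖ ^ 2) : ℝ) : ℂ)) := by
    intro z
    have hcast : ((((∑ i, ‖z i‖ ^ 2) ^ q * Real.exp (-m * ∑ i, ‖z i‖ ^ 2) : ℝ)) : ℂ)
        = ((∑ i, (‖z i‖ ^ 2 : ℝ) : ℝ) : ℂ) ^ q * ((rexp (-m * ∑ i, ‖z i‖ ^ 2) : ℝ) : ℂ) := by
      push_cast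
      ring
    have hsumcast : ((∑ i, (‖z i‖ ^ 2 : ℝ) : ℝ) : ℂ) = ∑ i, z i * (starRingEnd ℂ) (z i) :=
      calc ((∑ i, (‖z i‖ ^ 2 : ℝ) : ℝ) : ℂ) = ∑ i, ((‖z i‖ ^ 2 : ℝ) : ℂ) := by push_cast; rfl
        _ = ∑ i, z i * (starRingEnd ℂ) (z i) :=
            Finset.sum_congr rfl fun i _ => mul_conj_norm_sq (z i)
    have hexp : ((rexp (-m * ∑ i, ‖z i‖ ^ 2) : ℝ) : ℂ)
        = ∏ i, ((rexp (-m * ‖z i‖ ^ 2) : ℝ) : ℂ) := by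
      rw [← Complex.ofReal_prod, ← Real.exp_sum]
      congr 1
      rw [Finset.mul_sum]
    have hpow : (∑ i, z i * (starRingEnd ℂ) (z i)) ^ q
        = ∑ K : Fin q → Fin n, ∏ i, (z i * (starRingEnd ℂ) (z i)) ^ (Cnt K i) := by
      rw [Finset.sum_pow' Finset.univ (fun i => z i * (starRingEnd ℂ) (z i)) q]
      rw [Fintype.piFinset_univ]
      exact Finset.sum_congr rfl fun K _ =>
        prod_pow_Cnt (fun i => z i * (starRingEnd ℂ) (z i)) K
    rw [hcast, hsumcast, hexp, hpow, prod_pow_Cnt z I,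
      prod_pow_Cnt (fun i => (starRingEnd ℂ) (z i)) J, Finset.sum_mul, Finset.mul_sum]
    refine Finset.sum_congr rfl fun K _ => ?_
    rw [← Finset.prod_mul_distrib, ← Finset.prod_mul_distrib, ← Finset.prod_mul_distrib]
    refine Finset.prod_congr rfl fun i _ => ?_
    rw [pow_add, pow_add, mul_pow]
    ring
  simp only [hfun]
  rw [integral_finset_sum (μ := volume) _ (fun K _ => Integrable.fintype_prod
    (f := fun i (w : ℂ) => w ^ (Cnt I i + Cnt K i) *
      (starRingEnd ℂ) w ^ (Cnt J i + Cnt K i) * ((rexp (-m * ‖w‖ ^ 2) : ℝ) : ℂ))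
    (fun i => complex_moment_integrable hm _ _))]
  rw [Finset.mul_sum]
  have hterm : ∀ K : Fin q → Fin n,
      ((π : ℂ)⁻¹) ^ n * ∫ z : Fin n → ℂ, ∏ i, ((z i) ^ (Cnt I i + Cnt K i) *
          (starRingEnd ℂ) (z i) ^ (Cnt J i + Cnt K i) * ((rexp (-m * ‖z i‖ ^ 2) : ℝ) : ℂ))
      = if (∀ i, Cnt I i = Cnt J i) then
          (∏ i, ((Cnt I i + Cnt K i).factorial : ℂ)) / (m:ℂ) ^ (n + p + q)
        else 0 := by
    intro K
    rw [MeasureTheory.volume_pi]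
    rw [MeasureTheory.integral_fintype_prod_eq_prod (f := fun i (w : ℂ) =>
      w ^ (Cnt I i + Cnt K i) * (starRingEnd ℂ) w ^ (Cnt J i + Cnt K i) *
        ((rexp (-m * ‖w‖ ^ 2) : ℝ) : ℂ))]
    have hmom : ∀ i : Fin n, (∫ w : ℂ, w ^ (Cnt I i + Cnt K i) *
        (starRingEnd ℂ) w ^ (Cnt J i + Cnt K i) * ((rexp (-m * ‖w‖ ^ 2) : ℝ) : ℂ))
        = if Cnt I i + Cnt K i = Cnt J i + Cnt K i then
            (π : ℂ) * ((Cnt I i + Cnt K i).factorial : ℂ) / (m:ℂ) ^ (Cnt I i + Cnt K i + 1)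
          else 0 := fun i => complex_moment hm _ _
    simp only [hmom]
    have hpi : ((π : ℂ)⁻¹) ^ n = ∏ _i : Fin n, (π : ℂ)⁻¹ := by
      rw [Finset.prod_const, Finset.card_univ, Fintype.card_fin]
    rw [hpi, ← Finset.prod_mul_distrib]
    have hπ : (π : ℂ) ≠ 0 := by
      exact_mod_cast Real.pi_ne_zero
    have hfactor : ∀ i : Fin n, (π : ℂ)⁻¹ * (if Cnt I i + Cnt K i = Cnt J i + Cnt K i then
          (π : ℂ) * ((Cnt I i + Cnt K i).factorial : ℂ) / (m:ℂ) ^ (Cnt I i + Cnt K i + 1)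
        else 0)
        = if Cnt I i = Cnt J i then
            ((Cnt I i + Cnt K i).factorial : ℂ) / (m:ℂ) ^ (Cnt I i + Cnt K i + 1)
          else 0 := by
      intro i
      have hiff : (Cnt I i + Cnt K i = Cnt J i + Cnt K i) ↔ (Cnt I i = Cnt J i) := by omega
      by_cases hcc : Cnt I i = Cnt J i
      · rw [if_pos (hiff.mpr hcc), if_pos hcc]
        field_simp
      · rw [if_neg (fun hh => hcc (hiff.mp hh)), if_neg hcc, mul_zero]
    rw [Finset.prod_congr rfl fun i _ => hfactor i]
    by_cases hc : ∀ i, Cnt I i = Cnt J i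
    · rw [if_pos hc]
      rw [Finset.prod_congr rfl fun i _ => if_pos (hc i)]
      rw [Finset.prod_div_distrib, Finset.prod_pow_eq_pow_sum]
      have hexp2 : ∑ i, (Cnt I i + Cnt K i + 1) = n + p + q := by
        rw [Finset.sum_add_distrib, Finset.sum_add_distrib, sum_Cnt, sum_Cnt, Finset.sum_const,
          Finset.card_univ, Fintype.card_fin, smul_eq_mul, mul_one]
        omega
      rw [hexp2]
    · rw [if_neg hc]
      push_neg at hc
      obtain ⟨i0, hi0⟩ := hc
      exact Finset.prod_eq_zero (Finset.mem_univ i0) (if_neg hi0)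
  rw [Finset.sum_congr rfl fun K _ => hterm K]
  by_cases hc : ∀ i, Cnt I i = Cnt J i
  · rw [if_pos hc, Finset.sum_congr rfl fun K _ => if_pos hc, ← Finset.sum_div]
  · rw [if_neg hc, Finset.sum_congr rfl fun K _ => if_neg hc, Finset.sum_const, smul_zero]

/-- Combinatorial Gaussian integral lemma for symmetric functions
`A : {1,…,n}^p × {1,…,n}^p → ℂ`. -/
theorem symmetric_gaussian_sum (n p q : ℕ) (hn : 0 < n)
    (A : (Fin p → Fin n) → (Fin p → Fin n) → ℂ)
    (hsym : ∀ (σ η : Equiv.Perm (Fin p)) (I J : Fin p → Fin n),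
      A (I ∘ σ) (J ∘ η) = A I J)
    (m : ℝ) (hm : 0 < m) :
    ∑ I : Fin p → Fin n, ∑ J : Fin p → Fin n,
      A I J * (((π : ℂ)⁻¹) ^ n *
        ∫ z : Fin n → ℂ,
          (∏ a, z (I a)) * (∏ a, (starRingEnd ℂ) (z (J a))) *
            ((((∑ i, ‖z i‖ ^ 2) ^ q * Real.exp (-m * ∑ i, ‖z i‖ ^ 2) : ℝ)) : ℂ))
    = (∑ I : Fin p → Fin n, A I I) *
        (Nat.factorial p * Nat.factorial (n + p + q - 1)) /
          (Nat.factorial (p + n - 1) * (m : ℂ) ^ (n + p + q)) := by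
  classical
  obtain ⟨n', rfl⟩ : ∃ n'', n = n'' + 1 := ⟨n - 1, by omega⟩
  set N := n' + 1 + p + q with hN
  set Snat : (Fin p → Fin (n'+1)) → ℕ :=
    fun I => ∑ K : Fin q → Fin (n'+1), ∏ i, (Cnt I i + Cnt K i).factorial with hSnat
  have hIJ : ∀ I J : Fin p → Fin (n'+1),
      A I J * (((π : ℂ)⁻¹) ^ (n'+1) *
        ∫ z : Fin (n'+1) → ℂ,
          (∏ a, z (I a)) * (∏ a, (starRingEnd ℂ) (z (J a))) *
            ((((∑ i, ‖z i‖ ^ 2) ^ q * Real.exp (-m * ∑ i, ‖z i‖ ^ 2) : ℝ)) : ℂ))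
      = if (∀ i, Cnt J i = Cnt I i) then
          A I I * ((Snat I : ℂ) / (m:ℂ) ^ N) else 0 := by
    intro I J
    rw [pair_integral hm I J]
    by_cases hc : ∀ i, Cnt J i = Cnt I i
    · rw [if_pos (fun i => (hc i).symm), if_pos hc]
      obtain ⟨σ, hσ⟩ := exists_perm_of_cnt_eq (fun i => (hc i).symm)
      have hAJ : A I J = A I I := by
        have h1 := hsym 1 σ I I
        have hid : I ∘ (1 : Equiv.Perm (Fin p)) = I := rfl
        rw [hid, hσ] at h1
        exact h1
      rw [hAJ]
      congr 2
      rw [hSnat]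
      push_cast
      rfl
    · rw [if_neg (fun hh => hc (fun i => (hh i).symm)), if_neg hc, mul_zero]
  rw [Finset.sum_congr rfl fun I _ => Finset.sum_congr rfl fun J _ => hIJ I J]
  have hinner : ∀ I : Fin p → Fin (n'+1),
      (∑ J : Fin p → Fin (n'+1), if (∀ i, Cnt J i = Cnt I i) then
          A I I * ((Snat I : ℂ) / (m:ℂ) ^ N) else 0)
      = ((Finset.univ.filter fun J : Fin p → Fin (n'+1) => ∀ i, Cnt J i = Cnt I i).card : ℂ)
          * (A I I * ((Snat I : ℂ) / (m:ℂ) ^ N)) := by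
    intro I
    rw [← Finset.sum_filter, Finset.sum_const, nsmul_eq_mul]
  rw [Finset.sum_congr rfl fun I _ => hinner I]
  have hcount : ∀ I : Fin p → Fin (n'+1),
      ((Finset.univ.filter fun J : Fin p → Fin (n'+1) => ∀ i, Cnt J i = Cnt I i).card : ℂ)
        * (Snat I : ℂ) * ((p + (n'+1) - 1).factorial : ℂ)
      = (p.factorial : ℂ) * (((n'+1) + p + q - 1).factorial : ℂ) := by
    intro I
    have h1 := count_card (n'+1) p (Cnt I) (sum_Cnt I)
    have h2 := S_key n' q (Cnt I)
    rw [sum_Cnt I] at h2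
    have key : (Finset.univ.filter fun J : Fin p → Fin (n'+1) =>
          ∀ i, Cnt J i = Cnt I i).card * Snat I * (p + n').factorial
        = p.factorial * (p + n' + q).factorial := by
      calc (Finset.univ.filter fun J : Fin p → Fin (n'+1) =>
              ∀ i, Cnt J i = Cnt I i).card * Snat I * (p + n').factorial
          = (Finset.univ.filter fun J : Fin p → Fin (n'+1) =>
              ∀ i, Cnt J i = Cnt I i).card * (Snat I * (p + n').factorial) := by ring
        _ = (Finset.univ.filter fun J : Fin p → Fin (n'+1) =>
              ∀ i, Cnt J i = Cnt I i).card * ((∏ i, (Cnt I i).factorial) * (p + n' + q).factorial) := by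
            rw [hSnat, h2]
        _ = ((Finset.univ.filter fun J : Fin p → Fin (n'+1) =>
              ∀ i, Cnt J i = Cnt I i).card * ∏ i, (Cnt I i).factorial) * (p + n' + q).factorial := by
            ring
        _ = p.factorial * (p + n' + q).factorial := by rw [h1]
    have e1 : p + (n'+1) - 1 = p + n' := by omega
    have e2 : (n'+1) + p + q - 1 = p + n' + q := by omega
    rw [e1, e2]
    exact_mod_cast congrArg (Nat.cast : ℕ → ℂ) key
  rw [Finset.sum_mul, Finset.sum_div]
  refine Finset.sum_congr rfl fun I _ => ?_
  have hfne : ((p + (n'+1) - 1).factorial : ℂ) ≠ 0 :=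
    Nat.cast_ne_zero.mpr (Nat.factorial_ne_zero _)
  have hmne : (m:ℂ) ^ N ≠ 0 := pow_ne_zero _ (by exact_mod_cast hm.ne')
  rw [eq_div_iff (mul_ne_zero hfne hmne)]
  have hc := hcount I
  rw [show p + (n'+1) - 1 = p + n' from by omega] at hc ⊢
  rw [show n'+1+p+q-1 = p + n' + q from by omega] at hc ⊢
  field_simp
  linear_combination (A I I) * hc
end
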